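/- Let $n \ge 3$ be an integer, let $\varepsilon \ge 1$, let $\tau \in \{1/n, 1/2, 1 - 1/n\}$, and set $\tau' = \min\{\tau, 1 - \tau\}$. Let $b_1, \ldots, b_k$ be independent $\{0,1\}$-valued random variables, each equal to $1$ with probability $\tau$. Call a bit value $v \in \{0,1\}$ a minority value if the probability that $b_j = v$ equals $\tau'$ (for $\tau = 1/2$ both values are minority values). Then the probability that there exist an $m \in \mathbb{N}$ with $2^m \le k$ and a minority value $v$ such that the number of indices $j \in \{k - 2^m + 1, \ldots, k\}$ with $b_j = v$ is at least $2^m \tau' + s(\varepsilon, 2^m \tau')$ is at most $n^{-\varepsilon/3} \log_2 k$. -/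

import Mathlib

open MeasureTheory ProbabilityTheory

/-- The significance threshold `s(ε, μ) = ε · max{√(μ ln n), ln n}` used by the sig-cGA. -/
noncomputable def sigThreshold (n : ℕ) (ε μ : ℝ) : ℝ :=
  ε * max (Real.sqrt (μ * Real.log n)) (Real.log n)


lemma aux_log_lb (x : ℝ) (hx : 0 ≤ x) : 2*x/(2+x) ≤ Real.log (1+x) := by
  have key : MonotoneOn (fun x : ℝ => Real.log (1+x) - 2*x/(2+x)) (Set.Ici 0) := by
    apply monotoneOn_of_deriv_nonneg (convex_Ici 0)
    · apply ContinuousOn.sub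
      · apply ContinuousOn.log (by fun_prop)
        intro y hy; simp only [Set.mem_Ici] at hy; nlinarith
      · apply ContinuousOn.div (by fun_prop) (by fun_prop)
        intro y hy; simp only [Set.mem_Ici] at hy; nlinarith
    · intro y hy
      rw [interior_Ici] at hy
      simp only [Set.mem_Ioi] at hy
      have h1 : HasDerivAt (fun x : ℝ => Real.log (1+x)) (1/(1+y)) y := by
        have := (((hasDerivAt_id y).const_add (1:ℝ))).log (by simp only [id]; nlinarith)
        simpa using this
      have h2 : HasDerivAt (fun x : ℝ => 2*x/(2+x)) (4/(2+y)^2) y := by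
        have hd : HasDerivAt (fun x : ℝ => 2+x) 1 y := (hasDerivAt_id y).const_add 2
        have hc : HasDerivAt (fun x : ℝ => 2*x) 2 y := by
          simpa using (hasDerivAt_id y).const_mul (2:ℝ)
        have := hc.div hd (by nlinarith)
        convert this using 1
        exacts [rfl, rfl, rfl, by ring]
      exact (h1.sub h2).differentiableAt.differentiableWithinAt
    · intro y hy
      rw [interior_Ici] at hy
      simp only [Set.mem_Ioi] at hy
      have h1 : HasDerivAt (fun x : ℝ => Real.log (1+x)) (1/(1+y)) y := by
        have := (((hasDerivAt_id y).const_add (1:ℝ))).log (by simp only [id]; nlinarith)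
        simpa using this
      have h2 : HasDerivAt (fun x : ℝ => 2*x/(2+x)) (4/(2+y)^2) y := by
        have hd : HasDerivAt (fun x : ℝ => 2+x) 1 y := (hasDerivAt_id y).const_add 2
        have hc : HasDerivAt (fun x : ℝ => 2*x) 2 y := by
          simpa using (hasDerivAt_id y).const_mul (2:ℝ)
        have := hc.div hd (by nlinarith)
        convert this using 1
        exacts [rfl, rfl, rfl, by ring]
      rw [show deriv (fun x : ℝ => Real.log (1+x) - 2*x/(2+x)) y = _ from (h1.sub h2).deriv]
      rw [sub_nonneg, div_le_div_iff₀ (by positivity) (by nlinarith)]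
      nlinarith
  have h0 : (fun x : ℝ => Real.log (1+x) - 2*x/(2+x)) 0 = 0 := by norm_num
  have := key (Set.self_mem_Ici) (Set.mem_Ici.mpr hx) hx
  rw [h0] at this
  linarith

lemma aux_log_exp_ub (t : ℝ) (ht : 0 ≤ t) :
    Real.log (1 + Real.exp t) ≤ Real.log 2 + t/2 + t^2/8 := by
  -- first: g(t) = t*(1+exp t) - 2*exp t + 2 ≥ 0 for t ≥ 0
  have hg : ∀ t : ℝ, 0 ≤ t → 0 ≤ t*(1+Real.exp t) - 2*Real.exp t + 2 := by
    intro s hs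
    have key : MonotoneOn (fun t : ℝ => t*(1+Real.exp t) - 2*Real.exp t + 2) (Set.Ici 0) := by
      apply monotoneOn_of_deriv_nonneg (convex_Ici 0) (by fun_prop)
      · intro y hy
        exact (((hasDerivAt_id y).mul ((Real.hasDerivAt_exp y).const_add 1)).sub
          ((Real.hasDerivAt_exp y).const_mul 2)).add_const 2 |>.differentiableAt.differentiableWithinAt
      · intro y hy
        have hd : HasDerivAt (fun t : ℝ => t*(1+Real.exp t) - 2*Real.exp t + 2)
            (1*(1+Real.exp y) + y*Real.exp y - 2*Real.exp y) y := by
          exact (((hasDerivAt_id y).mul ((Real.hasDerivAt_exp y).const_add 1)).sub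
            ((Real.hasDerivAt_exp y).const_mul 2)).add_const 2
        rw [hd.deriv]
        have h1 : 1 - y ≤ Real.exp (-y) := by linarith [Real.add_one_le_exp (-y)]
        have h2 : Real.exp y * Real.exp (-y) = 1 := by
          rw [← Real.exp_add]; simp
        have h3 : Real.exp y * (1 - y) ≤ 1 := by
          calc Real.exp y * (1 - y) ≤ Real.exp y * Real.exp (-y) := by
                apply mul_le_mul_of_nonneg_left h1 (Real.exp_pos y).le
          _ = 1 := h2
        nlinarith
    have h0 : (fun t : ℝ => t*(1+Real.exp t) - 2*Real.exp t + 2) 0 = 0 := by norm_num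
    have := key Set.self_mem_Ici (Set.mem_Ici.mpr hs) hs
    rw [h0] at this
    simpa using this
  -- main: f(t) = log 2 + t/2 + t²/8 - log(1+exp t) ≥ 0
  have key : MonotoneOn (fun t : ℝ => Real.log 2 + t/2 + t^2/8 - Real.log (1+Real.exp t))
      (Set.Ici 0) := by
    apply monotoneOn_of_deriv_nonneg (convex_Ici 0)
    · apply ContinuousOn.sub (by fun_prop)
      apply ContinuousOn.log (by fun_prop)
      intro y _; positivity
    · intro y hy
      have h1 : HasDerivAt (fun t : ℝ => Real.log (1+Real.exp t)) (Real.exp y/(1+Real.exp y)) y :=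
        ((Real.hasDerivAt_exp y).const_add 1).log (by positivity)
      have h2 : HasDerivAt (fun t : ℝ => Real.log 2 + t/2 + t^2/8) (1/2 + 2*y/8) y := by
        have : HasDerivAt (fun t : ℝ => t/2 + t^2/8) (1/2 + 2*y/8) y := by
          have ha : HasDerivAt (fun t : ℝ => t/2) (1/2) y := by
            simpa using (hasDerivAt_id y).div_const 2
          have hb : HasDerivAt (fun t : ℝ => t^2/8) (2*y/8) y := by
            simpa using ((hasDerivAt_pow 2 y)).div_const 8
          exact ha.add hb
        have := this.const_add (Real.log 2); convert this using 2; exacts [rfl, rfl, by ring]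
      exact (h2.sub h1).differentiableAt.differentiableWithinAt
    · intro y hy
      rw [interior_Ici] at hy
      simp only [Set.mem_Ioi] at hy
      have h1 : HasDerivAt (fun t : ℝ => Real.log (1+Real.exp t)) (Real.exp y/(1+Real.exp y)) y :=
        ((Real.hasDerivAt_exp y).const_add 1).log (by positivity)
      have h2 : HasDerivAt (fun t : ℝ => Real.log 2 + t/2 + t^2/8) (1/2 + 2*y/8) y := by
        have : HasDerivAt (fun t : ℝ => t/2 + t^2/8) (1/2 + 2*y/8) y := by
          have ha : HasDerivAt (fun t : ℝ => t/2) (1/2) y := by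
            simpa using (hasDerivAt_id y).div_const 2
          have hb : HasDerivAt (fun t : ℝ => t^2/8) (2*y/8) y := by
            simpa using ((hasDerivAt_pow 2 y)).div_const 8
          exact ha.add hb
        have := this.const_add (Real.log 2); convert this using 2; exacts [rfl, rfl, by ring]
      rw [show deriv (fun t : ℝ => Real.log 2 + t/2 + t^2/8 - Real.log (1+Real.exp t)) y = _ from (h2.sub h1).deriv, sub_nonneg, div_le_iff₀ (by positivity)]
      have := hg y hy.le
      nlinarith
  have h0 : (fun t : ℝ => Real.log 2 + t/2 + t^2/8 - Real.log (1+Real.exp t)) 0 = 0 := by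
    norm_num
  have := key Set.self_mem_Ici (Set.mem_Ici.mpr ht) ht
  rw [h0] at this
  linarith


lemma bound_h (n : ℕ) (hn : 3 ≤ n) (ε : ℝ) (hε : 1 ≤ ε) (p μ s : ℝ) (N : ℕ)
    (hp0 : 0 < p) (hμ : μ = N * p) (hμ0 : 0 < μ) (hlogn : 1 ≤ Real.log n)
    (hs1 : ε * Real.log n ≤ s) (hs2 : ε^2 * (μ * Real.log n) ≤ s^2) (hs0 : 0 < s) :
    Real.exp (-(Real.log (1 + s/μ)) * (μ + s)) *
      ((1-p) + p * Real.exp (Real.log (1+s/μ)))^N ≤ (n:ℝ) ^ (-(ε/3)) := by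
  have hN : 0 < (N:ℝ) := by
    rcases Nat.eq_zero_or_pos N with h | h
    · exfalso; rw [h] at hμ; simp at hμ; rw [hμ] at hμ0; linarith
    · exact_mod_cast h
  set x := s/μ with hxdef
  have hx0 : 0 < x := div_pos hs0 hμ0
  have hsx : s = μ * x := by rw [hxdef]; field_simp
  have hexp : Real.exp (Real.log (1+x)) = 1+x := Real.exp_log (by linarith)
  have hbase : (1-p) + p * (1+x) = 1 + s/N := by
    have : p * x = s / N := by
      rw [hxdef, hμ]; field_simp
    linarith [this]
  rw [hexp, hbase]
  have hpow : (1 + s/(N:ℝ))^N ≤ Real.exp s := by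
    calc (1 + s/(N:ℝ))^N ≤ (Real.exp (s/N))^N := by
          apply pow_le_pow_left₀ (by positivity)
          linarith [Real.add_one_le_exp (s/(N:ℝ))]
    _ = Real.exp s := by
          rw [← Real.exp_nat_mul]
          congr 1; field_simp
  have hlog1 : 0 < Real.log (1+x) := Real.log_pos (by linarith)
  calc Real.exp (-(Real.log (1 + x)) * (μ + s)) * (1 + s/(N:ℝ))^N
      ≤ Real.exp (-(Real.log (1 + x)) * (μ + s)) * Real.exp s := by
        apply mul_le_mul_of_nonneg_left hpow (Real.exp_pos _).le
    _ = Real.exp (s - (μ+s) * Real.log (1+x)) := by rw [← Real.exp_add]; ring_nf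
    _ ≤ Real.exp (-((ε/3) * Real.log n)) := by
        apply Real.exp_le_exp.mpr
        -- key: (μ+s) log(1+x) - s ≥ (ε/3) log n
        have hlb := aux_log_lb x hx0.le
        have hkey : μ * x^2/(2+x) ≤ (μ+s) * Real.log (1+x) - s := by
          have he : (μ+s) * (2*x/(2+x)) - s = μ*x^2/(2+x) := by
            rw [hsx]; field_simp; ring
          have := mul_le_mul_of_nonneg_left hlb (by linarith : (0:ℝ) ≤ μ+s)
          linarith
        have hlogn0 : 0 < Real.log n := by linarith
        rcases le_or_gt x 1 with hx1 | hx1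
        · -- μ x² = s²/μ ≥ ε² log n, and 2+x ≤ 3
          have h1 : ε^2 * Real.log n ≤ μ * x^2 := by
            have : μ * x^2 = s^2/μ := by rw [hsx]; field_simp
            rw [this, le_div_iff₀ hμ0]; nlinarith
          have h2 : μ*x^2/3 ≤ μ*x^2/(2+x) := by
            apply div_le_div_of_nonneg_left (by positivity) (by linarith) (by linarith)
          have h3 : (ε/3) * Real.log n ≤ μ*x^2/3 := by
            nlinarith [mul_nonneg (mul_nonneg (sub_nonneg.mpr hε) (by linarith : (0:ℝ) ≤ ε)) hlogn0.le]
          linarith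
        · -- x ≥ 1: μx²/(2+x) ≥ s/3
          have h1 : s/3 ≤ μ*x^2/(2+x) := by
            rw [div_le_div_iff₀ (by norm_num) (by linarith), hsx]
            nlinarith
          have h3 : (ε/3) * Real.log n ≤ s/3 := by nlinarith
          linarith
    _ = (n:ℝ) ^ (-(ε/3)) := by
        rw [Real.rpow_def_of_pos (by positivity)]
        ring_nf

lemma bound_hoef (n : ℕ) (hn : 3 ≤ n) (ε : ℝ) (hε : 1 ≤ ε) (μ s : ℝ) (N : ℕ)
    (hμ : μ = N * (1/2:ℝ)) (hμ0 : 0 < μ) (hlogn : 1 ≤ Real.log n)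
    (hs2 : ε^2 * (μ * Real.log n) ≤ s^2) (hs0 : 0 < s) :
    Real.exp (-(4*s/N) * (μ + s)) *
      ((1-(1/2:ℝ)) + (1/2) * Real.exp (4*s/N))^N ≤ 1/2 * (n:ℝ) ^ (-(ε/3)) := by
  have hN : 0 < (N:ℝ) := by
    rcases Nat.eq_zero_or_pos N with h | h
    · exfalso; rw [h] at hμ; simp at hμ; rw [hμ] at hμ0; linarith
    · exact_mod_cast h
  set t := 4*s/(N:ℝ) with htdef
  have ht0 : 0 < t := by positivity
  have hbase : (1-(1/2:ℝ)) + (1/2) * Real.exp t = (1 + Real.exp t)/2 := by ring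
  rw [hbase]
  have hbpos : (0:ℝ) < (1 + Real.exp t)/2 := by positivity
  have hpow : ((1 + Real.exp t)/2)^N ≤ Real.exp (N * (t/2 + t^2/8)) := by
    have hlog := aux_log_exp_ub t ht0.le
    calc ((1 + Real.exp t)/2)^N = Real.exp (N * Real.log ((1 + Real.exp t)/2)) := by
          rw [Real.exp_nat_mul, Real.exp_log hbpos]
    _ ≤ Real.exp (N * (t/2 + t^2/8)) := by
          apply Real.exp_le_exp.mpr
          apply mul_le_mul_of_nonneg_left _ hN.le
          rw [Real.log_div (by positivity) (by norm_num)]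
          linarith
  have hlogn0 : 0 < Real.log n := by linarith
  calc Real.exp (-t * (μ + s)) * ((1 + Real.exp t)/2)^N
      ≤ Real.exp (-t * (μ + s)) * Real.exp (N * (t/2 + t^2/8)) := by
        apply mul_le_mul_of_nonneg_left hpow (Real.exp_pos _).le
    _ = Real.exp (-t * (μ + s) + N * (t/2 + t^2/8)) := by rw [← Real.exp_add]
    _ ≤ Real.exp (-(ε^2 * Real.log n)) := by
        apply Real.exp_le_exp.mpr
        have hNμ : (N:ℝ) = 2*μ := by rw [hμ]; ring
        have hexp_eq : -t * (μ + s) + N * (t/2 + t^2/8) = -(s^2/μ) := by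
          rw [htdef, hNμ]; field_simp; ring
        rw [hexp_eq]
        have : ε^2 * Real.log n ≤ s^2/μ := by
          rw [le_div_iff₀ hμ0]; nlinarith
        linarith
    _ ≤ 1/2 * (n:ℝ) ^ (-(ε/3)) := by
        rw [Real.rpow_def_of_pos (by positivity : (0:ℝ) < (n:ℝ))]
        have h32 : 3 * Real.log 2 ≤ 2 * Real.log 3 := by
          have h89 : Real.log (8:ℝ) ≤ Real.log (9:ℝ) :=
            Real.log_le_log (by norm_num) (by norm_num)
          rw [show (8:ℝ) = 2^3 by norm_num, show (9:ℝ) = 3^2 by norm_num,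
            Real.log_pow, Real.log_pow] at h89
          push_cast at h89
          linarith
        have hL3 : Real.log 3 ≤ Real.log n :=
          Real.log_le_log (by norm_num) (by exact_mod_cast hn)
        have hlog3 : 0 < Real.log 3 := Real.log_pos (by norm_num)
        rw [show (1:ℝ)/2 * Real.exp (Real.log n * -(ε/3))
            = Real.exp (Real.log n * -(ε/3) - Real.log 2) by
          rw [Real.exp_sub, Real.exp_log (by norm_num : (0:ℝ) < 2)]; ring]
        apply Real.exp_le_exp.mpr
        have hq : 2/3 ≤ ε^2 - ε/3 := by nlinarith
        nlinarith [mul_le_mul_of_nonneg_right hq hlogn0.le,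
          mul_le_mul_of_nonneg_left hL3 (by norm_num : (0:ℝ) ≤ 2/3)]


lemma bernoulli_mgf {Ω : Type*} [MeasurableSpace Ω] (P : Measure Ω) [IsProbabilityMeasure P]
    (Y : Ω → ℝ) (hY01 : ∀ ω, Y ω = 0 ∨ Y ω = 1) (hYmeas : Measurable Y)
    (p : ℝ) (hp : (P {ω | Y ω = 1}).toReal = p) (t : ℝ) :
    mgf Y P t = (1-p) + p * Real.exp t := by
  have hYint : Integrable Y P := by
    apply (integrable_const (1:ℝ)).mono' hYmeas.aestronglyMeasurable
    apply ae_of_all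
    intro ω; rcases hY01 ω with h | h <;> simp [h]
  have hptwise : (fun ω => Real.exp (t * Y ω)) =
      fun ω => 1 + (Real.exp t - 1) * Y ω := by
    funext ω; rcases hY01 ω with h | h <;> simp [h]
  have hind : Y = Set.indicator {ω | Y ω = 1} (fun _ => (1:ℝ)) := by
    funext ω; rcases hY01 ω with h | h
    · rw [h, Set.indicator_of_notMem]; simp [Set.mem_setOf_eq, h]
    · rw [h, Set.indicator_of_mem]; simp [Set.mem_setOf_eq, h]
  have hmeasset : MeasurableSet {ω | Y ω = 1} := hYmeas (measurableSet_singleton 1)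
  have hintY : ∫ ω, Y ω ∂P = p := by
    rw [← hp]
    conv_lhs => rw [hind]
    rw [integral_indicator_const _ hmeasset]
    simp
    rfl
  rw [mgf, hptwise]
  rw [integral_add (integrable_const 1) (hYint.const_mul _)]
  simp only [integral_const, probReal_univ, smul_eq_mul, one_mul]
  rw [integral_const_mul, hintY]
  ring

lemma chernoff_bound {Ω : Type*} [MeasurableSpace Ω] (P : Measure Ω) [IsProbabilityMeasure P]
    {k : ℕ} (Y : Fin k → Ω → ℝ) (hY01 : ∀ j ω, Y j ω = 0 ∨ Y j ω = 1)
    (hYmeas : ∀ j, Measurable (Y j))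
    (hYindep : iIndepFun Y P)
    (p : ℝ) (hp : ∀ j, (P {ω | Y j ω = 1}).toReal = p)
    (W : Finset (Fin k)) (t : ℝ) (ht : 0 ≤ t) (c : ℝ) :
    (P {ω | c ≤ ∑ j ∈ W, Y j ω}).toReal ≤
      Real.exp (-t * c) * ((1-p) + p * Real.exp t)^(W.card) := by
  have hXmeas : Measurable (∑ j ∈ W, Y j) := by
    have := Finset.measurable_sum W (fun j (_ : j ∈ W) => hYmeas j)
    convert this using 1
    funext ω; simp [Finset.sum_apply]
  have h_int : Integrable (fun ω => Real.exp (t * (∑ j ∈ W, Y j) ω)) P := by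
    apply (integrable_const (Real.exp (t * W.card))).mono'
      ((hXmeas.const_mul t).exp).aestronglyMeasurable
    apply ae_of_all
    intro ω
    rw [Real.norm_eq_abs, abs_of_pos (Real.exp_pos _), Real.exp_le_exp]
    apply mul_le_mul_of_nonneg_left _ ht
    rw [Finset.sum_apply]
    calc ∑ j ∈ W, Y j ω ≤ ∑ j ∈ W, 1 := by
          apply Finset.sum_le_sum
          intro j _; rcases hY01 j ω with h | h <;> simp [h]
    _ = W.card := by simp
  have hch := measure_ge_le_exp_mul_mgf (X := ∑ j ∈ W, Y j) (μ := P) c ht h_int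
  rw [hYindep.mgf_sum hYmeas W] at hch
  have hprod : ∏ j ∈ W, mgf (Y j) P t = ((1-p) + p * Real.exp t)^(W.card) := by
    rw [Finset.prod_congr rfl (fun j _ => bernoulli_mgf P (Y j) (hY01 j) (hYmeas j) p (hp j) t)]
    exact Finset.prod_const _
  rw [hprod] at hch
  refine le_trans (le_of_eq ?_) hch
  congr 2
  ext ω
  simp [Finset.sum_apply]


lemma window_card (k a : ℕ) (ha : a ≤ k) :
    (Finset.univ.filter (fun j : Fin k => k - a ≤ (j:ℕ))).card = a := by
  have h2 : (Finset.univ.filter (fun j : Fin k => k - a ≤ (j:ℕ))).card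
      = (Finset.Ico (k-a) k).card := by
    apply Finset.card_bij (fun (j : Fin k) _ => (j:ℕ))

    · intro j hj
      simp only [Finset.mem_filter] at hj
      simp only [Finset.mem_Ico]
      exact ⟨hj.2, j.isLt⟩
    · intro j1 _ j2 _ h
      exact Fin.ext h
    · intro x hx
      simp only [Finset.mem_Ico] at hx
      exact ⟨⟨x, hx.2⟩, by simp only [Finset.mem_filter]; exact ⟨Finset.mem_univ _, hx.1⟩, rfl⟩
  rw [h2, Nat.card_Ico]
  omega

/-- No false significance in an unbiased history: let `n ≥ 3`, `ε ≥ 1`,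
`τ ∈ {1/n, 1/2, 1 - 1/n}` and `τ' = min{τ, 1-τ}`. Let `b 0, …, b (k-1)` be independent
`{0,1}`-valued random variables, each `1` with probability `τ`. A value `v ∈ {0,1}` is a
minority value if `Pr[b j = v] = τ'`. Then the probability that for some `m ∈ ℕ` with
`2^m ≤ k` and some minority value `v`, the number of indices among the last `2^m` ones whose
bit equals `v` is at least `2^m τ' + s(ε, 2^m τ')`, is at most `n^{-ε/3} log₂ k`. -/
theorem no_false_significance
    (n : ℕ) (hn : 3 ≤ n) (ε : ℝ) (hε : 1 ≤ ε)
    (τ : ℝ) (hτ : τ = 1 / (n : ℝ) ∨ τ = 1 / 2 ∨ τ = 1 - 1 / (n : ℝ))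
    (τ' : ℝ) (hτ' : τ' = min τ (1 - τ))
    (k : ℕ)
    (Ω : Type*) [MeasurableSpace Ω] (P : Measure Ω) [IsProbabilityMeasure P]
    (b : Fin k → Ω → ℕ)
    (hmeas : ∀ j, Measurable (b j))
    (hval : ∀ j ω, b j ω ≤ 1)
    (hdist : ∀ j, P {ω | b j ω = 1} = ENNReal.ofReal τ)
    (hindep : iIndepFun b P) :
    (P {ω | ∃ m : ℕ, 2 ^ m ≤ k ∧ ∃ v : ℕ, v ≤ 1 ∧
        (if v = 1 then τ else 1 - τ) = τ' ∧
        (2 ^ m : ℝ) * τ' + sigThreshold n ε ((2 ^ m : ℝ) * τ') ≤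
          ((Finset.univ.filter (fun j : Fin k => k - 2 ^ m ≤ (j : ℕ) ∧ b j ω = v)).card : ℝ)
      }).toReal ≤ (n : ℝ) ^ (-(ε / 3)) * Real.logb 2 k := by
  classical
  have hn3R : (3:ℝ) ≤ (n:ℝ) := by exact_mod_cast hn
  have h1n0 : (0:ℝ) < 1/(n:ℝ) := by positivity
  have h1n3 : 1/(n:ℝ) ≤ 1/3 := by
    rw [div_le_div_iff₀ (by linarith) (by norm_num)]; linarith
  have hτfacts : 0 < τ ∧ τ ≤ 1 := by
    rcases hτ with h|h|h <;> rw [h] <;> constructor <;> linarith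
  have hτ'val : τ' = 1/(n:ℝ) ∨ τ' = 1/2 := by
    rcases hτ with h|h|h
    · left; rw [hτ', h, min_eq_left (by linarith)]
    · right; rw [hτ', h]; norm_num
    · left; rw [hτ', h, min_eq_right (by linarith)]; ring
  have hτ'pos : 0 < τ' := by rcases hτ'val with h|h <;> rw [h] <;> linarith
  have hτ'half : τ' ≤ 1/2 := by rcases hτ'val with h|h <;> rw [h] <;> linarith
  have hlogn1 : 1 < Real.log n := by
    rw [Real.lt_log_iff_exp_lt (by linarith)]
    calc Real.exp 1 < 2.7182818286 := Real.exp_one_lt_d9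
    _ ≤ (n:ℝ) := by linarith
  have hlogn : 1 ≤ Real.log n := hlogn1.le
  -- the case k = 0
  rcases Nat.eq_zero_or_pos k with hk0 | hkpos
  · subst hk0
    have hempty : {ω : Ω | ∃ m : ℕ, 2 ^ m ≤ 0 ∧ ∃ v : ℕ, v ≤ 1 ∧
        (if v = 1 then τ else 1 - τ) = τ' ∧
        (2 ^ m : ℝ) * τ' + sigThreshold n ε ((2 ^ m : ℝ) * τ') ≤
          ((Finset.univ.filter (fun j : Fin 0 => 0 - 2 ^ m ≤ (j : ℕ) ∧ b j ω = v)).card : ℝ)}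
        = (∅ : Set Ω) := by
      ext ω
      simp only [Set.mem_setOf_eq, Set.mem_empty_iff_false, iff_false, not_exists]
      rintro m ⟨hm, -⟩
      have := Nat.pow_pos (n := m) (show 0 < 2 by norm_num)
      omega
    rw [hempty, measure_empty, ENNReal.toReal_zero, Nat.cast_zero, Real.logb_zero, mul_zero]
  -- main case
  have hk0' : k ≠ 0 := by omega
  set L := Nat.log 2 k with hLdef
  set sg : ℕ → ℝ := fun m => sigThreshold n ε ((2^m:ℝ)*τ') with hsgdef
  have hμpos : ∀ m : ℕ, (0:ℝ) < (2^m:ℝ)*τ' := fun m => by positivity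
  have hsg1 : ∀ m, ε * Real.log n ≤ sg m := by
    intro m
    exact mul_le_mul_of_nonneg_left (le_max_right _ _) (by linarith)
  have hsgpos : ∀ m, 1 < sg m := by
    intro m
    have := hsg1 m
    nlinarith
  have hsg2 : ∀ m, ε^2 * (((2^m:ℝ)*τ') * Real.log n) ≤ (sg m)^2 := by
    intro m
    have h1 : Real.sqrt (((2^m:ℝ)*τ') * Real.log n)
        ≤ max (Real.sqrt (((2^m:ℝ)*τ') * Real.log n)) (Real.log n) := le_max_left _ _
    have h2 : ε * Real.sqrt (((2^m:ℝ)*τ') * Real.log n) ≤ sg m :=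
      mul_le_mul_of_nonneg_left h1 (by linarith)
    have h3 : (ε * Real.sqrt (((2^m:ℝ)*τ') * Real.log n))^2
        = ε^2 * (((2^m:ℝ)*τ') * Real.log n) := by
      rw [mul_pow, Real.sq_sqrt (by positivity)]
    nlinarith [Real.sqrt_nonneg (((2^m:ℝ)*τ') * Real.log n),
      mul_nonneg (by linarith : (0:ℝ) ≤ ε) (Real.sqrt_nonneg (((2^m:ℝ)*τ') * Real.log n))]
  -- generic Chernoff bound for the count event
  have hygen : ∀ v : ℕ, v ≤ 1 → ∀ (t c : ℝ), 0 ≤ t → ∀ m : ℕ, 2^m ≤ k →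
      (P {ω | c ≤ ((Finset.univ.filter
            (fun j : Fin k => k - 2^m ≤ (j:ℕ) ∧ b j ω = v)).card : ℝ)}).toReal ≤
        Real.exp (-t * c) * ((1 - (if v = 1 then τ else 1-τ))
          + (if v = 1 then τ else 1-τ) * Real.exp t)^(2^m) := by
    intro v hv t c ht m hmk
    set Y : Fin k → Ω → ℝ := fun j ω => if b j ω = v then 1 else 0 with hYdef
    have hY01 : ∀ j ω, Y j ω = 0 ∨ Y j ω = 1 := by
      intro j ω; by_cases h : b j ω = v <;> simp [hYdef, h]
    have hYmeas : ∀ j, Measurable (Y j) := by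
      intro j
      exact (measurable_from_top (f := fun x : ℕ => if x = v then (1:ℝ) else 0)).comp (hmeas j)
    have hYindep : iIndepFun Y P := by
      have := hindep.comp (fun _ => fun x : ℕ => if x = v then (1:ℝ) else 0)
        (fun _ => measurable_from_top)
      exact this
    have hp : ∀ j, (P {ω | Y j ω = 1}).toReal = (if v = 1 then τ else 1-τ) := by
      intro j
      have hset : {ω | Y j ω = 1} = {ω | b j ω = v} := by
        ext ω; by_cases h : b j ω = v <;> simp [hYdef, h]
      rcases Nat.le_one_iff_eq_zero_or_eq_one.mp hv with h0 | h1
      · subst h0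
        rw [hset]
        have hcompl : {ω : Ω | b j ω = 0} = {ω : Ω | b j ω = 1}ᶜ := by
          ext ω
          simp only [Set.mem_setOf_eq, Set.mem_compl_iff]
          have := hval j ω; omega
        have hms : MeasurableSet {ω : Ω | b j ω = 1} := hmeas j (measurableSet_singleton 1)
        rw [hcompl, measure_compl hms (measure_ne_top P _), measure_univ, hdist j]
        rw [if_neg (by norm_num : ¬ (0:ℕ) = 1)]
        rw [ENNReal.toReal_sub_of_le (by simpa using hτfacts.2) (by norm_num)]
        simp [ENNReal.toReal_ofReal hτfacts.1.le]
      · subst h1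
        rw [hset, hdist j, if_pos rfl]
        exact ENNReal.toReal_ofReal hτfacts.1.le
    set W := Finset.univ.filter (fun j : Fin k => k - 2^m ≤ (j:ℕ)) with hWdef
    have hcount : ∀ ω, ((Finset.univ.filter
          (fun j : Fin k => k - 2^m ≤ (j:ℕ) ∧ b j ω = v)).card : ℝ) = ∑ j ∈ W, Y j ω := by
      intro ω
      rw [← Finset.filter_filter, Finset.card_filter]
      push_cast
      apply Finset.sum_congr rfl
      intro j _
      by_cases h : b j ω = v <;> simp [hYdef, h]
    have hcb := chernoff_bound P Y hY01 hYmeas hYindep _ hp W t ht c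
    rw [hWdef, window_card k (2^m) hmk] at hcb
    refine le_trans (le_of_eq ?_) hcb
    congr 2
    ext ω
    simp only [Set.mem_setOf_eq]
    rw [hcount ω]
  -- bound for a single (m, v) event, generic p
  have hB1 : ∀ m : ℕ, 2^m ≤ k → ∀ v : ℕ, v ≤ 1 → ((if v = 1 then τ else 1-τ) = τ') →
      (P {ω | (2^m:ℝ)*τ' + sg m ≤ ((Finset.univ.filter
          (fun j : Fin k => k - 2^m ≤ (j:ℕ) ∧ b j ω = v)).card : ℝ)}).toReal
        ≤ (n:ℝ)^(-(ε/3)) := by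
    intro m hmk v hv hcond
    have hμ0 := hμpos m
    have key := hygen v hv (Real.log (1 + sg m/((2^m:ℝ)*τ'))) ((2^m:ℝ)*τ' + sg m)
      (Real.log_nonneg (by
        have h := div_nonneg (by linarith [hsgpos m] : (0:ℝ) ≤ sg m) hμ0.le
        linarith)) m hmk
    rw [hcond] at key
    refine key.trans ?_
    exact bound_h n hn ε hε τ' ((2^m:ℝ)*τ') (sg m) (2^m) hτ'pos (by push_cast; ring)
      hμ0 hlogn (hsg1 m) (hsg2 m) (by linarith [hsgpos m])
  -- bound for a single (m, v) event in the p = 1/2 case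
  have hB2 : τ' = 1/2 → ∀ m : ℕ, 2^m ≤ k → ∀ v : ℕ, v ≤ 1 →
      ((if v = 1 then τ else 1-τ) = τ') →
      (P {ω | (2^m:ℝ)*τ' + sg m ≤ ((Finset.univ.filter
          (fun j : Fin k => k - 2^m ≤ (j:ℕ) ∧ b j ω = v)).card : ℝ)}).toReal
        ≤ 1/2 * (n:ℝ)^(-(ε/3)) := by
    intro hhalf m hmk v hv hcond
    have hμ0 := hμpos m
    have key := hygen v hv (4 * sg m / ((2^m : ℕ):ℝ)) ((2^m:ℝ)*τ' + sg m)
      (div_nonneg (by linarith [hsgpos m]) (by positivity)) m hmk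
    rw [hcond] at key
    rw [hhalf] at key ⊢
    refine key.trans ?_
    exact bound_hoef n hn ε hε ((2^m:ℝ)*(1/2)) (sg m) (2^m)
      (by push_cast; ring) (by positivity) hlogn
      (by rw [← hhalf]; exact hsg2 m) (by linarith [hsgpos m])
  -- per-m bound
  have hA : ∀ m : ℕ, 2^m ≤ k →
      (P {ω | ∃ v : ℕ, v ≤ 1 ∧ (if v = 1 then τ else 1 - τ) = τ' ∧
        (2^m:ℝ)*τ' + sg m ≤ ((Finset.univ.filter
          (fun j : Fin k => k - 2^m ≤ (j:ℕ) ∧ b j ω = v)).card : ℝ)}).toReal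
        ≤ (n:ℝ)^(-(ε/3)) := by
    intro m hmk
    set B : ℕ → Set Ω := fun v => {ω | (2^m:ℝ)*τ' + sg m ≤ ((Finset.univ.filter
          (fun j : Fin k => k - 2^m ≤ (j:ℕ) ∧ b j ω = v)).card : ℝ)} with hBdef
    rcases hτ with hcase | hcase | hcase
    · -- τ = 1/n : only v = 1 qualifies
      have hτ'eq : τ' = 1/(n:ℝ) := by rw [hτ', hcase, min_eq_left (by linarith)]
      have hsub : {ω : Ω | ∃ v : ℕ, v ≤ 1 ∧ (if v = 1 then τ else 1 - τ) = τ' ∧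
          (2^m:ℝ)*τ' + sg m ≤ ((Finset.univ.filter
            (fun j : Fin k => k - 2^m ≤ (j:ℕ) ∧ b j ω = v)).card : ℝ)} ⊆ B 1 := by
        rintro ω ⟨v, hv, hcond, hle⟩
        rcases Nat.le_one_iff_eq_zero_or_eq_one.mp hv with h0 | h1
        · exfalso
          subst h0
          rw [if_neg (by norm_num : ¬ (0:ℕ) = 1), hcase, hτ'eq] at hcond
          linarith
        · subst h1; exact hle
      calc _ ≤ (P (B 1)).toReal :=
            ENNReal.toReal_mono (measure_ne_top P _) (measure_mono hsub)
        _ ≤ _ := hB1 m hmk 1 le_rfl (by rw [if_pos rfl, hcase, hτ'eq])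
    · -- τ = 1/2
      have hτ'eq : τ' = 1/2 := by rw [hτ', hcase]; norm_num
      have hsub : {ω : Ω | ∃ v : ℕ, v ≤ 1 ∧ (if v = 1 then τ else 1 - τ) = τ' ∧
          (2^m:ℝ)*τ' + sg m ≤ ((Finset.univ.filter
            (fun j : Fin k => k - 2^m ≤ (j:ℕ) ∧ b j ω = v)).card : ℝ)} ⊆ B 0 ∪ B 1 := by
        rintro ω ⟨v, hv, hcond, hle⟩
        rcases Nat.le_one_iff_eq_zero_or_eq_one.mp hv with h0 | h1
        · left; subst h0; exact hle
        · right; subst h1; exact hle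
      have h0 : (P (B 0)).toReal ≤ 1/2 * (n:ℝ)^(-(ε/3)) :=
        hB2 hτ'eq m hmk 0 (by norm_num)
          (by rw [if_neg (by norm_num : ¬ (0:ℕ) = 1), hcase, hτ'eq]; norm_num)
      have h1 : (P (B 1)).toReal ≤ 1/2 * (n:ℝ)^(-(ε/3)) :=
        hB2 hτ'eq m hmk 1 le_rfl (by rw [if_pos rfl, hcase, hτ'eq])
      calc _ ≤ ((P (B 0)) + (P (B 1))).toReal :=
            ENNReal.toReal_mono (by
                simp only [ne_eq, ENNReal.add_eq_top, not_or]
                exact ⟨measure_ne_top P _, measure_ne_top P _⟩)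
              ((measure_mono hsub).trans (measure_union_le _ _))
        _ = (P (B 0)).toReal + (P (B 1)).toReal :=
            ENNReal.toReal_add (measure_ne_top P _) (measure_ne_top P _)
        _ ≤ 1/2 * (n:ℝ)^(-(ε/3)) + 1/2 * (n:ℝ)^(-(ε/3)) := add_le_add h0 h1
        _ = (n:ℝ)^(-(ε/3)) := by ring
    · -- τ = 1 - 1/n : only v = 0 qualifies
      have hτ'eq : τ' = 1/(n:ℝ) := by rw [hτ', hcase, min_eq_right (by linarith)]; ring
      have hsub : {ω : Ω | ∃ v : ℕ, v ≤ 1 ∧ (if v = 1 then τ else 1 - τ) = τ' ∧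
          (2^m:ℝ)*τ' + sg m ≤ ((Finset.univ.filter
            (fun j : Fin k => k - 2^m ≤ (j:ℕ) ∧ b j ω = v)).card : ℝ)} ⊆ B 0 := by
        rintro ω ⟨v, hv, hcond, hle⟩
        rcases Nat.le_one_iff_eq_zero_or_eq_one.mp hv with h0 | h1
        · subst h0; exact hle
        · exfalso
          subst h1
          rw [if_pos rfl, hcase, hτ'eq] at hcond
          linarith
      calc _ ≤ (P (B 0)).toReal :=
            ENNReal.toReal_mono (measure_ne_top P _) (measure_mono hsub)
        _ ≤ _ := hB1 m hmk 0 (by norm_num)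
            (by rw [if_neg (by norm_num : ¬ (0:ℕ) = 1), hcase, hτ'eq]; ring)
  -- the union over m
  have hSsub : {ω : Ω | ∃ m : ℕ, 2 ^ m ≤ k ∧ ∃ v : ℕ, v ≤ 1 ∧
      (if v = 1 then τ else 1 - τ) = τ' ∧
      (2 ^ m : ℝ) * τ' + sigThreshold n ε ((2 ^ m : ℝ) * τ') ≤
        ((Finset.univ.filter (fun j : Fin k => k - 2 ^ m ≤ (j : ℕ) ∧ b j ω = v)).card : ℝ)}
      ⊆ ⋃ m ∈ Finset.Icc 1 L, {ω : Ω | ∃ v : ℕ, v ≤ 1 ∧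
        (if v = 1 then τ else 1 - τ) = τ' ∧
        (2^m:ℝ)*τ' + sg m ≤ ((Finset.univ.filter
          (fun j : Fin k => k - 2^m ≤ (j:ℕ) ∧ b j ω = v)).card : ℝ)} := by
    rintro ω ⟨m, hmk, v, hv, hcond, hle⟩
    have hm1 : 1 ≤ m := by
      by_contra hcon
      have hm0 : m = 0 := by omega
      subst hm0
      have hc : ((Finset.univ.filter
          (fun j : Fin k => k - 2^0 ≤ (j:ℕ) ∧ b j ω = v)).card : ℕ) ≤ 1 := by
        calc _ ≤ (Finset.univ.filter (fun j : Fin k => k - 2^0 ≤ (j:ℕ))).card := by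
              apply Finset.card_le_card
              intro j hj
              simp only [Finset.mem_filter] at hj ⊢
              exact ⟨hj.1, hj.2.1⟩
        _ = 1 := window_card k (2^0) hmk
      have hcR : ((Finset.univ.filter
          (fun j : Fin k => k - 2^0 ≤ (j:ℕ) ∧ b j ω = v)).card : ℝ) ≤ 1 := by
        exact_mod_cast hc
      have hthr : (1:ℝ) < (2^0:ℝ)*τ' + sigThreshold n ε ((2^0:ℝ)*τ') := by
        have := hsgpos 0
        simp only [hsgdef] at this
        have h20 : ((2:ℝ)^(0:ℕ)) = 1 := by norm_num
        nlinarith [hτ'pos]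
      linarith
    have hmL : m ≤ L := (Nat.le_log_iff_pow_le (by norm_num) hk0').mpr hmk
    refine Set.mem_biUnion ?_ ⟨v, hv, hcond, hle⟩
    exact Finset.mem_Icc.mpr ⟨hm1, hmL⟩
  have hL2k : ∀ m ∈ Finset.Icc 1 L, 2^m ≤ k := by
    intro m hm
    rw [Finset.mem_Icc] at hm
    calc 2^m ≤ 2^L := Nat.pow_le_pow_right (by norm_num) hm.2
    _ ≤ k := Nat.pow_log_le_self 2 hk0'
  calc (P _).toReal
      ≤ (∑ m ∈ Finset.Icc 1 L, P {ω : Ω | ∃ v : ℕ, v ≤ 1 ∧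
          (if v = 1 then τ else 1 - τ) = τ' ∧
          (2^m:ℝ)*τ' + sg m ≤ ((Finset.univ.filter
            (fun j : Fin k => k - 2^m ≤ (j:ℕ) ∧ b j ω = v)).card : ℝ)}).toReal := by
        apply ENNReal.toReal_mono
        · exact (ENNReal.sum_lt_top.mpr (fun m _ => measure_lt_top P _)).ne
        · exact (measure_mono hSsub).trans (measure_biUnion_finset_le _ _)
    _ = ∑ m ∈ Finset.Icc 1 L, (P {ω : Ω | ∃ v : ℕ, v ≤ 1 ∧
          (if v = 1 then τ else 1 - τ) = τ' ∧
          (2^m:ℝ)*τ' + sg m ≤ ((Finset.univ.filter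
            (fun j : Fin k => k - 2^m ≤ (j:ℕ) ∧ b j ω = v)).card : ℝ)}).toReal :=
        ENNReal.toReal_sum (fun m _ => measure_ne_top P _)
    _ ≤ ∑ m ∈ Finset.Icc 1 L, (n:ℝ)^(-(ε/3)) :=
        Finset.sum_le_sum (fun m hm => hA m (hL2k m hm))
    _ = (L:ℝ) * (n:ℝ)^(-(ε/3)) := by
        rw [Finset.sum_const, Nat.card_Icc, nsmul_eq_mul]
        simp
    _ ≤ Real.logb 2 k * (n:ℝ)^(-(ε/3)) := by
        apply mul_le_mul_of_nonneg_right _ (Real.rpow_nonneg (by positivity) _)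
        have h1 : ((2:ℝ))^L ≤ (k:ℝ) := by exact_mod_cast Nat.pow_log_le_self 2 hk0'
        have h2 : Real.logb 2 ((2:ℝ)^L) ≤ Real.logb 2 k :=
          Real.logb_le_logb_of_le (by norm_num) (by positivity) h1
        rwa [Real.logb_pow, Real.logb_self_eq_one (by norm_num), mul_one] at h2
    _ = (n:ℝ)^(-(ε/3)) * Real.logb 2 k := mul_comm _ _
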